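/- If l = b_1 + ... + b_m where b_n are independent Bernoulli random variables with success probability r/(n-1+r), then P(l = j) = (Γ(r)/Γ(m+r)) |s(m,j)| r^j for j = 0, ..., m. That is, l follows the Chinese restaurant table distribution CRT(m,r). -/
import Mathlib


/-- Unsigned Stirling numbers of the first kind. -/
def stirling1 : ℕ → ℕ → ℕ
  | 0, 0 => 1
  | 0, _ + 1 => 0
  | _ + 1, 0 => 0
  | m + 1, j + 1 => stirling1 m j + m * stirling1 m (j + 1)

/-- `bernSumPMF r n` is the PMF of b₁ + ⋯ + bₙ with independent
bₖ ~ Bernoulli(r/(k-1+r)). -/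
noncomputable def bernSumPMF (r : ℝ) : ℕ → ℕ → ℝ
  | 0, j => if j = 0 then 1 else 0
  | n + 1, j =>
      bernSumPMF r n j * (1 - r / (n + r)) +
        (if j = 0 then 0 else bernSumPMF r n (j - 1) * (r / (n + r)))

lemma mul_stirling1_zero (m : ℕ) : (m : ℝ) * stirling1 m 0 = 0 := by
  cases m with
  | zero => simp
  | succ n => simp [stirling1]

lemma bernoulli_sum_key (r : ℝ) (hr : 0 < r) :
    ∀ m j, bernSumPMF r m j
      = Real.Gamma r / Real.Gamma (m + r) * stirling1 m j * r ^ j := by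
  intro m
  induction m with
  | zero =>
    intro j
    cases j with
    | zero =>
      simp [bernSumPMF, stirling1, div_self (Real.Gamma_pos_of_pos hr).ne']
    | succ j => simp [bernSumPMF, stirling1]
  | succ m ih =>
    intro j
    have hmr : (0:ℝ) < (m : ℝ) + r := by positivity
    have hG : Real.Gamma ((m:ℝ) + r) ≠ 0 := (Real.Gamma_pos_of_pos hmr).ne'
    have hGsucc : Real.Gamma (((m : ℕ) + 1 : ℕ) + r)
        = ((m:ℝ) + r) * Real.Gamma ((m:ℝ) + r) := by
      push_cast
      rw [show (m:ℝ) + 1 + r = ((m:ℝ) + r) + 1 by ring, Real.Gamma_add_one hmr.ne']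
    cases j with
    | zero =>
      simp only [bernSumPMF, reduceIte, add_zero, ih 0, hGsucc, pow_zero, mul_one]
      cases m with
      | zero =>
        have h2 : (stirling1 1 0 : ℝ) = 0 := by simp [stirling1]
        rw [h2]
        push_cast
        rw [zero_add, div_self hr.ne']
        ring
      | succ n =>
        have h1 : (stirling1 (n + 1) 0 : ℝ) = 0 := by simp [stirling1]
        have h2 : (stirling1 (n + 1 + 1) 0 : ℝ) = 0 := by simp [stirling1]
        rw [h1, h2]
        ring
    | succ j =>
      have hrec : (stirling1 (m+1) (j+1) : ℝ)
          = stirling1 m j + (m : ℝ) * stirling1 m (j+1) := by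
        show ((stirling1 m j + m * stirling1 m (j+1) : ℕ) : ℝ) = _
        push_cast; ring
      simp only [bernSumPMF, if_neg (Nat.succ_ne_zero j), Nat.succ_sub_one,
        ih (j+1), ih j, hGsucc, hrec]
      field_simp
      ring

/-- The sum of independent Bernoulli(r/(n-1+r)) variables, n = 1,…,m, follows the
Chinese restaurant table distribution: P(l = j) = (Γ(r)/Γ(m+r)) |s(m,j)| r^j. -/
theorem bernoulli_sum_eq_crt (r : ℝ) (hr : 0 < r) (m : ℕ) (hm : 0 < m)
    (j : ℕ) (hj : j ≤ m) :
    bernSumPMF r m j = Real.Gamma r / Real.Gamma (m + r) * stirling1 m j * r ^ j := by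
  exact bernoulli_sum_key r hr m j
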